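/- The eigenvalues of the Seidel matrix of the complete k-partite graph K_{p_1,...,p_k} other than -1 (with multiplicity n-k) are exactly the roots of the polynomial f(x) = ∏_{i=1}^k (x - 2p_i + 1) + Σ_{j=1}^k p_j ∏_{i≠j} (x - 2p_i + 1); i.e., the characteristic polynomial of the Seidel matrix equals (x+1)^{n-k} f(x). -/

import Mathlib

open Polynomial Matrix Finset

open scoped Classical in
/-- The Seidel matrix of a simple graph: 0 on the diagonal, -1 for adjacent pairs,
1 for distinct non-adjacent pairs. -/
noncomputable def seidel {V : Type*} [Fintype V] (G : SimpleGraph V) : Matrix V V ℝ :=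
  fun i j => if i = j then 0 else if G.Adj i j then -1 else 1

/-- The complete multipartite graph with parts of sizes `p 0, ..., p (k-1)`. -/
def completeMultipartite {k : ℕ} (p : Fin k → ℕ) : SimpleGraph (Σ i : Fin k, Fin (p i)) where
  Adj u v := u.1 ≠ v.1
  symm := ⟨fun _ _ h => h.symm⟩
  loopless := ⟨fun _ h => h rfl⟩

set_option maxHeartbeats 1600000 in
/-- The characteristic polynomial of the Seidel matrix of `K_{p_1,...,p_k}` equals
`(x+1)^{n-k} f(x)` where
`f(x) = ∏_i (x - 2p_i + 1) + Σ_j p_j ∏_{i ≠ j} (x - 2p_i + 1)`. -/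
theorem seidel_charpoly_completeMultipartite {k : ℕ} (p : Fin k → ℕ)
    (hpos : ∀ i, 1 ≤ p i) :
    (seidel (completeMultipartite p)).charpoly =
      (X + 1) ^ ((∑ i, p i) - k) *
        (∏ i, (X - C (2 * (p i : ℝ) - 1)) +
          ∑ j, C ((p j : ℝ)) * ∏ i ∈ univ.erase j, (X - C (2 * (p i : ℝ) - 1))) := by
  classical
  set R := Polynomial ℝ with hR
  let K := FractionRing R
  let φ : R →+* K := algebraMap R K
  have hφ : Function.Injective φ := IsFractionRing.injective R K
  set n := ∑ i, p i with hn
  have hkn : k ≤ n := by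
    calc k = ∑ _i : Fin k, 1 := by simp
    _ ≤ n := Finset.sum_le_sum fun i _ => hpos i
  have hcardV : Fintype.card (Σ i : Fin k, Fin (p i)) = n := by simp [hn]
  set c : K := φ (X + 1) with hc
  have hc0 : c ≠ 0 := by
    rw [hc, map_ne_zero_iff φ hφ]
    intro h
    have h2 : (X + 1 : R) = X - Polynomial.C (-1) := by
      rw [map_neg, Polynomial.C_1, sub_neg_eq_add]
    rw [h2] at h
    exact Polynomial.X_sub_C_ne_zero _ h
  set q : Fin k → K := fun i => ((p i : ℕ) : K) with hq
  have hXC : ∀ i, φ (X - Polynomial.C (2 * ((p i : ℕ) : ℝ) - 1)) = c - 2 * q i := by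
    intro i
    have h1 : Polynomial.C (2 * ((p i : ℕ) : ℝ) - 1) = 2 * ((p i : ℕ) : R) - 1 := by
      simp only [map_sub, _root_.map_mul, map_ofNat, map_natCast, Polynomial.C_1]
    rw [map_sub, h1, hc]
    simp only [map_sub, map_add, _root_.map_one, _root_.map_mul, map_ofNat, map_natCast]
    ring
  have hqi : ∀ i, c - 2 * q i ≠ 0 := by
    intro i
    rw [← hXC i, map_ne_zero_iff φ hφ]
    exact Polynomial.X_sub_C_ne_zero _
  apply hφ
  -- LHS : determinant computation over K
  rw [Matrix.charpoly, RingHom.map_det, RingHom.mapMatrix_apply]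
  -- the rank-(k+1) decomposition of the char matrix
  set U : Matrix (Σ i : Fin k, Fin (p i)) (Unit ⊕ Fin k) K :=
    fun x s => Sum.elim (fun _ => 1) (fun j => if x.1 = j then -2 else 0) s with hU
  set Vm : Matrix (Unit ⊕ Fin k) (Σ i : Fin k, Fin (p i)) K :=
    fun s x => Sum.elim (fun _ => (1 : K)) (fun j => if x.1 = j then 1 else 0) s with hVm
  have hM : (charmatrix (seidel (completeMultipartite p))).map φ
      = c • 1 + U * Vm := by
    ext x y
    have hmul : (U * Vm) x y = 1 + (if x.1 = y.1 then (-2 : K) else 0) := by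
      rw [Matrix.mul_apply]
      simp only [Matrix.mul_apply, Fintype.sum_sum_type, hU, hVm, Sum.elim_inl, Sum.elim_inr,
        Finset.univ_unique, Finset.sum_singleton, one_mul, ite_mul, zero_mul, mul_ite, mul_one,
        mul_zero]
      congr 1
      by_cases h : x.1 = y.1
      · simp [h, Finset.sum_ite_eq]
      · rw [Finset.sum_eq_zero, if_neg h]
        intro b _
        by_cases h2 : y.1 = b
        · subst h2; simp [h]
        · simp [h2]
    rw [Matrix.add_apply, hmul, Matrix.smul_apply, Matrix.map_apply]
    by_cases hxy : x = y
    · subst hxy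
      rw [charmatrix_apply_eq, Matrix.one_apply_eq, if_pos rfl]
      have : seidel (completeMultipartite p) x x = 0 := by simp [seidel]
      rw [this, map_sub, hc]
      simp [smul_eq_mul]
      ring
    · rw [charmatrix_apply_ne _ _ _ hxy, Matrix.one_apply_ne hxy]
      by_cases hpart : x.1 = y.1
      · have : seidel (completeMultipartite p) x y = 1 := by
          simp [seidel, hxy, completeMultipartite, hpart]
        rw [this, if_pos hpart]
        norm_num
      · have : seidel (completeMultipartite p) x y = -1 := by
          simp [seidel, hxy, completeMultipartite, hpart]
        rw [this, if_neg hpart]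
        simp
  rw [hM]
  have hdetc : (c • (1 : Matrix (Σ i : Fin k, Fin (p i)) (Σ i : Fin k, Fin (p i)) K)).det
      = c ^ n := by
    rw [Matrix.det_smul, Matrix.det_one, hcardV, mul_one]
  have hdet1 : IsUnit ((c • (1 : Matrix (Σ i : Fin k, Fin (p i)) (Σ i : Fin k, Fin (p i)) K)).det) := by
    rw [hdetc]
    exact (pow_ne_zero n hc0).isUnit
  rw [Matrix.det_add_mul U Vm hdet1, hdetc]
  have hAinv : (c • (1 : Matrix (Σ i : Fin k, Fin (p i)) (Σ i : Fin k, Fin (p i)) K))⁻¹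
      = c⁻¹ • 1 := by
    apply Matrix.inv_eq_right_inv
    rw [Matrix.smul_mul, Matrix.mul_smul, Matrix.one_mul, smul_smul, mul_inv_cancel₀ hc0, one_smul]
  rw [hAinv, Matrix.mul_smul, Matrix.mul_one, Matrix.smul_mul]
  set W : Matrix (Unit ⊕ Fin k) (Unit ⊕ Fin k) K := Vm * U with hW
  have h1W : ((1 : Matrix (Unit ⊕ Fin k) (Unit ⊕ Fin k) K) + c⁻¹ • W)
      = c⁻¹ • (c • 1 + W) := by
    rw [smul_add, smul_smul, inv_mul_cancel₀ hc0, one_smul]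
  rw [h1W, Matrix.det_smul]
  have hcardS : Fintype.card (Unit ⊕ Fin k) = 1 + k := by simp
  rw [hcardS]
  -- second decomposition : c•1 + W = D + U2 * V2
  set e : Unit ⊕ Fin k → K := Sum.elim (fun _ => c) (fun i => c - 2 * q i) with he
  set D : Matrix (Unit ⊕ Fin k) (Unit ⊕ Fin k) K := Matrix.diagonal e with hD
  set U2 : Matrix (Unit ⊕ Fin k) (Fin 2) K :=
    fun s t => Sum.elim (fun _ => if t = 0 then 1 else 0) (fun i => if t = 0 then 0 else q i) s
    with hU2
  set V2 : Matrix (Fin 2) (Unit ⊕ Fin k) K :=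
    fun t s => if t = 0 then Sum.elim (fun _ => (n : K)) (fun j => -2 * q j) s
      else Sum.elim (fun _ => 1) (fun _ => 0) s with hV2
  have hsum_part : ∀ f : Fin k → K, (∑ x : Σ i : Fin k, Fin (p i), f x.1) = ∑ i, (p i : K) * f i := by
    intro f
    rw [← Finset.univ_sigma_univ, Finset.sum_sigma]
    exact Finset.sum_congr rfl fun i _ => by
      simp [Finset.sum_const, Fintype.card_fin, nsmul_eq_mul, mul_comm]
  have hNW : c • (1 : Matrix (Unit ⊕ Fin k) (Unit ⊕ Fin k) K) + W = D + U2 * V2 := by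
    ext s t
    have hW' : W s t = ∑ x : Σ i : Fin k, Fin (p i), Vm s x * U x t := by
      rw [hW, Matrix.mul_apply]
    have hUV2 : (U2 * V2) s t = U2 s 0 * V2 0 t + U2 s 1 * V2 1 t := by
      rw [Matrix.mul_apply, Fin.sum_univ_two]
    rcases s with _ | i <;> rcases t with _ | j <;>
      simp only [Matrix.add_apply, hW', hUV2] <;>
      simp only [Matrix.add_apply, Matrix.smul_apply, Matrix.one_apply, hW', hUV2, hU, hVm, hU2,
        hV2, hD, Matrix.diagonal_apply, he, Sum.elim_inl, Sum.elim_inr, one_mul, mul_one,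
        smul_eq_mul]
    · rw [hsum_part (fun _ => (1 : K))]
      simp only [mul_one]
      have hcast : (∑ x : Fin k, ((p x : ℕ) : K)) = ((n : ℕ) : K) := by
        rw [hn, Nat.cast_sum]
      simp [hcast]
    · rw [hsum_part (fun l => if l = j then (-2 : K) else 0)]
      rw [Finset.sum_eq_single j (by intro b _ hb; simp [hb]) (by simp)]
      simp [hq, mul_comm]
    · rw [hsum_part (fun l => if l = i then (1 : K) else 0)]
      rw [Finset.sum_eq_single i (by intro b _ hb; simp [hb]) (by simp)]
      simp [hq, mul_comm]
    · rw [hsum_part (fun l => (if l = i then (1:K) else 0) * (if l = j then (-2:K) else 0))]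
      by_cases hij : i = j
      · subst hij
        rw [Finset.sum_eq_single i (by intro b _ hb; simp [hb]) (by simp)]
        simp [Sum.inr.injEq]
        ring
      · rw [Finset.sum_eq_zero (by intro b _; by_cases h1 : b = i <;> by_cases h2 : b = j <;>
          simp_all)]
        simp [Sum.inr.injEq, hij]
  rw [hNW]
  have hdetD : D.det = c * ∏ i, (c - 2 * q i) := by
    rw [hD, Matrix.det_diagonal, Fintype.prod_sum_type]
    simp [he]
  have hdetDunit : IsUnit D.det := by
    rw [hdetD]
    exact ((mul_ne_zero hc0 (Finset.prod_ne_zero_iff.2 fun i _ => hqi i))).isUnit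
  rw [Matrix.det_add_mul U2 V2 hdetDunit, hdetD]
  set einv : Unit ⊕ Fin k → K := Sum.elim (fun _ => c⁻¹) (fun i => (c - 2 * q i)⁻¹) with heinv
  have hDinv : D⁻¹ = Matrix.diagonal einv := by
    apply Matrix.inv_eq_right_inv
    rw [hD, Matrix.diagonal_mul_diagonal]
    have hee : (fun s => e s * einv s) = fun (_ : Unit ⊕ Fin k) => (1 : K) := by
      funext s
      rcases s with _ | i
      · exact mul_inv_cancel₀ hc0
      · exact mul_inv_cancel₀ (hqi i)
    rw [hee]
    exact Matrix.diagonal_one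
  rw [hDinv]
  -- compute the 2×2 matrix
  set E : Matrix (Fin 2) (Fin 2) K := V2 * Matrix.diagonal einv * U2 with hE
  have hEapp : ∀ a b, E a b = ∑ s, V2 a s * einv s * U2 s b := by
    intro a b
    rw [hE, Matrix.mul_apply]
    exact Finset.sum_congr rfl fun s _ => by rw [Matrix.mul_diagonal]
  have hE00 : E 0 0 = (n : K) * c⁻¹ := by
    rw [hEapp, Fintype.sum_sum_type]
    simp [hV2, hU2, heinv]
  have hE01 : E 0 1 = ∑ j, -2 * q j * (c - 2 * q j)⁻¹ * q j := by
    rw [hEapp, Fintype.sum_sum_type]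
    simp [hV2, hU2, heinv]
  have hE10 : E 1 0 = c⁻¹ := by
    rw [hEapp, Fintype.sum_sum_type]
    simp [hV2, hU2, heinv]
  have hE11 : E 1 1 = 0 := by
    rw [hEapp, Fintype.sum_sum_type]
    simp [hV2, hU2, heinv]
  have hdetE : (1 + E).det = (1 + (n : K) * c⁻¹) - (∑ j, -2 * q j * (c - 2 * q j)⁻¹ * q j) * c⁻¹ := by
    rw [Matrix.det_fin_two]
    simp only [Matrix.add_apply, Matrix.one_apply_eq, Matrix.one_apply_ne (by decide : (0 : Fin 2) ≠ 1),
      Matrix.one_apply_ne (by decide : (1 : Fin 2) ≠ 0), hE00, hE01, hE10, hE11, zero_add, add_zero]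
    ring
  rw [hdetE]
  -- RHS : map under φ
  have hRHS : φ ((X + 1) ^ (n - k) *
      (∏ i, (X - Polynomial.C (2 * ((p i : ℕ) : ℝ) - 1)) +
        ∑ j, Polynomial.C (((p j : ℕ) : ℝ)) *
          ∏ i ∈ univ.erase j, (X - Polynomial.C (2 * ((p i : ℕ) : ℝ) - 1))))
      = c ^ (n - k) * ((∏ i, (c - 2 * q i)) +
          ∑ j, q j * ∏ i ∈ univ.erase j, (c - 2 * q i)) := by
    rw [_root_.map_mul, map_pow, ← hc, map_add, map_sum]
    congr 1
    congr 1
    · exact (map_prod φ _ _).trans (Finset.prod_congr rfl fun i _ => hXC i)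
    · refine Finset.sum_congr rfl fun j _ => ?_
      rw [_root_.map_mul]
      simp only [map_natCast]
      exact congrArg _ ((map_prod φ _ _).trans (Finset.prod_congr rfl fun i _ => hXC i))
  rw [hRHS]
  set P : K := ∏ i, (c - 2 * q i) with hP
  set S : K := ∑ j, q j * ∏ i ∈ univ.erase j, (c - 2 * q i) with hS
  have hprodP : ∀ j : Fin k,
      (c - 2 * q j) * (∏ i ∈ univ.erase j, (c - 2 * q i)) = P := fun j => by
    rw [hP]
    exact Finset.mul_prod_erase univ (fun i => c - 2 * q i) (Finset.mem_univ j)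
  have hnn : ((n : ℕ) : K) = ∑ j, q j := by
    simp only [hq]
    rw [hn, Nat.cast_sum]
  have hsum1 : P * (∑ j, -2 * q j * (c - 2 * q j)⁻¹ * q j)
      = ∑ j, (-2) * (q j * q j) * ∏ i ∈ univ.erase j, (c - 2 * q i) := by
    rw [Finset.mul_sum]
    refine Finset.sum_congr rfl fun j _ => ?_
    rw [← hprodP j]
    calc ((c - 2 * q j) * ∏ i ∈ univ.erase j, (c - 2 * q i)) *
          (-2 * q j * (c - 2 * q j)⁻¹ * q j)
        = ((-2) * (q j * q j) * ∏ i ∈ univ.erase j, (c - 2 * q i)) *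
            ((c - 2 * q j) * (c - 2 * q j)⁻¹) := by ring
    _ = (-2) * (q j * q j) * ∏ i ∈ univ.erase j, (c - 2 * q i) := by
        rw [mul_inv_cancel₀ (hqi j), mul_one]
  have hkey : (c * P) * (1 + ((n : ℕ) : K) * c⁻¹
        - (∑ j, -2 * q j * (c - 2 * q j)⁻¹ * q j) * c⁻¹)
      = c * (P + S) := by
    have expand : (c * P) * (1 + ((n : ℕ) : K) * c⁻¹
          - (∑ j, -2 * q j * (c - 2 * q j)⁻¹ * q j) * c⁻¹)
        = c * P + ((n : ℕ) : K) * P * (c * c⁻¹)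
          - (P * (∑ j, -2 * q j * (c - 2 * q j)⁻¹ * q j)) * (c * c⁻¹) := by
      ring
    rw [expand, mul_inv_cancel₀ hc0, mul_one, mul_one, hsum1, hnn, Finset.sum_mul,
      mul_add, hS, Finset.mul_sum, add_sub_assoc, ← Finset.sum_sub_distrib]
    congr 1
    refine Finset.sum_congr rfl fun j _ => ?_
    rw [← hprodP j]
    ring
  have hc1k : c ^ n * c⁻¹ ^ (1 + k) * c = c ^ (n - k) := by
    have h1 : c ^ n * c = c ^ (n - k) * c ^ (1 + k) := by
      rw [← pow_succ, ← pow_add]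
      congr 1
      omega
    calc c ^ n * c⁻¹ ^ (1 + k) * c = (c ^ n * c) * (c ^ (1 + k))⁻¹ := by
          rw [inv_pow]; ring
    _ = c ^ (n - k) * (c ^ (1 + k) * (c ^ (1 + k))⁻¹) := by rw [h1]; ring
    _ = c ^ (n - k) := by rw [mul_inv_cancel₀ (pow_ne_zero _ hc0), mul_one]
  calc c ^ n * (c⁻¹ ^ (1 + k) * ((c * P) * (1 + ((n : ℕ) : K) * c⁻¹
        - (∑ j, -2 * q j * (c - 2 * q j)⁻¹ * q j) * c⁻¹)))
      = (c ^ n * c⁻¹ ^ (1 + k)) * ((c * P) * (1 + ((n : ℕ) : K) * c⁻¹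
        - (∑ j, -2 * q j * (c - 2 * q j)⁻¹ * q j) * c⁻¹)) := by ring
  _ = (c ^ n * c⁻¹ ^ (1 + k)) * (c * (P + S)) := by rw [hkey]
  _ = (c ^ n * c⁻¹ ^ (1 + k) * c) * (P + S) := by ring
  _ = c ^ (n - k) * (P + S) := by rw [hc1k]
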